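/- Let n ∈ ℕ, H a complex Hilbert space, and A an n×n quantum magic square on H. If A dilates to a quantum permutation matrix, then A can be positively perturbed: there exists a self-adjoint block operator X on ⊕_{(i,j)∈[n]×[n]} H whose ((i,j),(k,l)) block is 0 whenever i = k or j = l, such that φ(A) + X is a positive operator. -/

import Mathlib

noncomputable section

instance piLpCompleteSpace {ι : Type} (p : ENNReal) (β : ι → Type)
    [∀ i, UniformSpace (β i)] [∀ i, CompleteSpace (β i)] :
    CompleteSpace (PiLp p β) :=
  PiLp.completeSpace p β

structure HilbertC where
  carrier : Type
  [normed : NormedAddCommGroup carrier]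
  [ips : InnerProductSpace ℂ carrier]
  [complete : CompleteSpace carrier]

attribute [instance] HilbertC.normed HilbertC.ips HilbertC.complete

/-- The block operator on the Hilbert-space direct sum `⊕_{i ∈ ι} H` (realised as
`PiLp 2 (fun _ : ι => H)`) associated with a matrix `T` of bounded operators on `H`. -/
def blockOp {ι : Type} [Fintype ι] [DecidableEq ι]
    {H : Type} [NormedAddCommGroup H] [InnerProductSpace ℂ H] [CompleteSpace H]
    (T : ι → ι → H →L[ℂ] H) :
    PiLp 2 (fun _ : ι => H) →L[ℂ] PiLp 2 (fun _ : ι => H) :=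
  ((PiLp.continuousLinearEquiv 2 ℂ (fun _ : ι => H)).symm.toContinuousLinearMap).comp
    ((ContinuousLinearMap.pi
        (fun p => ∑ q, (T p q).comp (ContinuousLinearMap.proj q))).comp
      (PiLp.continuousLinearEquiv 2 ℂ (fun _ : ι => H)).toContinuousLinearMap)

/-- An `n × n` quantum magic square on the Hilbert space `H`. -/
def IsQMS {n : ℕ} {H : Type} [NormedAddCommGroup H] [InnerProductSpace ℂ H] [CompleteSpace H]
    (A : Fin n → Fin n → H →L[ℂ] H) : Prop :=
  (∀ i j, (A i j).IsPositive) ∧ (∀ i, ∑ k, A i k = 1) ∧ (∀ j, ∑ k, A k j = 1)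

/-- The blocks of the operator `φ(A)`: the `((i,j),(k,l))` block is
`δ_{(i,j),(k,l)} A_{i,j} − A_{i,j} A_{k,l}`. -/
def phiBlocks {n : ℕ} {H : Type} [NormedAddCommGroup H] [InnerProductSpace ℂ H] [CompleteSpace H]
    (A : Fin n → Fin n → H →L[ℂ] H) :
    (Fin n × Fin n) → (Fin n × Fin n) → H →L[ℂ] H :=
  fun p q => (if p = q then A p.1 p.2 else 0) - A p.1 p.2 * A q.1 q.2

/-- `A` can be positively perturbed: there is a self-adjoint block operator `X` whose
`((i,j),(k,l))` block vanishes whenever `i = k` or `j = l`, with `φ(A) + X ≥ 0`. -/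
def CanPerturb {n : ℕ} {H : Type} [NormedAddCommGroup H] [InnerProductSpace ℂ H] [CompleteSpace H]
    (A : Fin n → Fin n → H →L[ℂ] H) : Prop :=
  ∃ X : (Fin n × Fin n) → (Fin n × Fin n) → H →L[ℂ] H,
    IsSelfAdjoint (blockOp X) ∧
    (∀ p q : Fin n × Fin n, p.1 = q.1 ∨ p.2 = q.2 → X p q = 0) ∧
    (blockOp (phiBlocks A) + blockOp X).IsPositive

/-- `A` dilates to a quantum permutation matrix. -/
def DilatesToQPM {n : ℕ} {H : Type} [NormedAddCommGroup H] [InnerProductSpace ℂ H]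
    [CompleteSpace H] (A : Fin n → Fin n → H →L[ℂ] H) : Prop :=
  ∃ (K : HilbertC) (Vi : H →L[ℂ] K.carrier) (P : Fin n → Fin n → K.carrier →L[ℂ] K.carrier),
    Isometry Vi ∧
    (∀ i j, IsSelfAdjoint (P i j) ∧ IsIdempotentElem (P i j)) ∧
    (∀ i, ∑ k, P i k = 1) ∧ (∀ j, ∑ k, P k j = 1) ∧
    ∀ i j, A i j = (ContinuousLinearMap.adjoint Vi).comp ((P i j).comp Vi)

lemma blockOp_apply {ι : Type} [Fintype ι] [DecidableEq ι]
    {H : Type} [NormedAddCommGroup H] [InnerProductSpace ℂ H] [CompleteSpace H]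
    (T : ι → ι → H →L[ℂ] H) (x : PiLp 2 (fun _ : ι => H)) (p : ι) :
    blockOp T x p = ∑ q, T p q (x q) := by
  simp [blockOp, ContinuousLinearMap.sum_apply]

lemma proj_orthog {K : Type} [NormedAddCommGroup K] [InnerProductSpace ℂ K] [CompleteSpace K]
    {m : Type} [Fintype m] [DecidableEq m] (P : m → K →L[ℂ] K)
    (hsa : ∀ k, IsSelfAdjoint (P k)) (hid : ∀ k, IsIdempotentElem (P k))
    (hsum : ∑ k, P k = 1) {j l : m} (hjl : j ≠ l) : (P j).comp (P l) = 0 := by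
  ext y
  simp only [ContinuousLinearMap.comp_apply, ContinuousLinearMap.zero_apply]
  set x := P l y with hx
  have key : ∀ k (z : K), RCLike.re (inner ℂ (P k z) z : ℂ) = ‖P k z‖ ^ 2 := by
    intro k z
    have hadj : ContinuousLinearMap.adjoint (P k) = P k :=
      ContinuousLinearMap.isSelfAdjoint_iff'.mp (hsa k)
    have h1 : (inner ℂ (P k z) z : ℂ) = inner ℂ (P k z) (P k z) := by
      calc (inner ℂ (P k z) z : ℂ) = inner ℂ ((P k * P k) z) z := by rw [hid k]
        _ = inner ℂ (ContinuousLinearMap.adjoint (P k) (P k z)) z := by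
            rw [hadj]; rfl
        _ = inner ℂ (P k z) (P k z) := ContinuousLinearMap.adjoint_inner_left _ _ _
    rw [h1, inner_self_eq_norm_sq]
  have hsum2 : ∀ z : K, ∑ k, ‖P k z‖ ^ 2 = ‖z‖ ^ 2 := by
    intro z
    have h2 : (inner ℂ ((∑ k, P k) z) z : ℂ) = ∑ k, (inner ℂ (P k z) z : ℂ) := by
      rw [ContinuousLinearMap.sum_apply, sum_inner]
    rw [hsum] at h2
    have h3 : RCLike.re (inner ℂ ((1 : K →L[ℂ] K) z) z : ℂ) = ∑ k, ‖P k z‖ ^ 2 := by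
      rw [h2, map_sum]
      exact Finset.sum_congr rfl fun k _ => key k z
    rw [show ((1 : K →L[ℂ] K) z) = z from rfl, inner_self_eq_norm_sq] at h3
    exact h3.symm
  have hlx : P l x = x := by
    rw [hx, ← ContinuousLinearMap.mul_apply, hid l]
  have h0 : ∑ k ∈ Finset.univ.erase l, ‖P k x‖ ^ 2 = 0 := by
    have h4 := hsum2 x
    rw [← Finset.add_sum_erase _ _ (Finset.mem_univ l), hlx] at h4
    linarith
  have h5 : ‖P j x‖ ^ 2 = 0 :=
    (Finset.sum_eq_zero_iff_of_nonneg (fun k _ => sq_nonneg ‖P k x‖)).mp h0 j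
      (Finset.mem_erase.mpr ⟨hjl, Finset.mem_univ j⟩)
  rw [pow_eq_zero_iff two_ne_zero, norm_eq_zero] at h5
  exact h5

set_option maxHeartbeats 1000000 in
theorem stmt4 (n : ℕ)
    (H : Type) [NormedAddCommGroup H] [InnerProductSpace ℂ H] [CompleteSpace H]
    (A : Fin n → Fin n → H →L[ℂ] H) (hA : IsQMS A)
    (hdil : DilatesToQPM A) :
    CanPerturb A := by
  obtain ⟨K, Vi, P, hV, hP, hrow, hcol, hAV⟩ := hdil
  -- inner ℂ products are preserved by Vi
  have hVnorm : ∀ u : H, ‖Vi u‖ = ‖u‖ := by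
    intro u
    have := hV.dist_eq u 0
    simpa [dist_eq_norm] using this
  have hVinner : ∀ u v : H, (inner ℂ (Vi u) (Vi v) : ℂ) = inner ℂ u v := by
    intro u v
    exact (LinearIsometry.inner_map_map ⟨Vi.toLinearMap, hVnorm⟩ u v)
  have hVV : (ContinuousLinearMap.adjoint Vi).comp Vi = 1 := by
    ext u
    apply ext_inner_left ℂ
    intro v
    calc (inner ℂ v (((ContinuousLinearMap.adjoint Vi).comp Vi) u) : ℂ) = inner ℂ v (ContinuousLinearMap.adjoint Vi (Vi u)) := rfl
      _ = inner ℂ (Vi v) (Vi u) := ContinuousLinearMap.adjoint_inner_right _ _ _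
      _ = inner ℂ v u := hVinner v u
      _ = inner ℂ v ((1 : H →L[ℂ] H) u) := rfl
  have hPadj : ∀ i j, ContinuousLinearMap.adjoint (P i j) = P i j := fun i j =>
    ContinuousLinearMap.isSelfAdjoint_iff'.mp (hP i j).1
  have hAadj : ∀ i j, ContinuousLinearMap.adjoint (A i j) = A i j := fun i j =>
    ContinuousLinearMap.isSelfAdjoint_iff'.mp (hA.1 i j).isSelfAdjoint
  set T : Fin n × Fin n → H →L[ℂ] K.carrier :=
    fun p => (P p.1 p.2).comp Vi - Vi.comp (A p.1 p.2) with hTdef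
  set X : (Fin n × Fin n) → (Fin n × Fin n) → H →L[ℂ] H :=
    fun p q => (ContinuousLinearMap.adjoint Vi).comp ((P p.1 p.2).comp ((P q.1 q.2).comp Vi)) -
      (if p = q then A p.1 p.2 else 0) with hXdef
  -- adjoint of T
  have hadjT : ∀ p, ContinuousLinearMap.adjoint (T p)
      = ((ContinuousLinearMap.adjoint Vi).comp (P p.1 p.2)) - ((A p.1 p.2).comp (ContinuousLinearMap.adjoint Vi)) := by
    intro p
    rw [hTdef]
    simp only [map_sub, ContinuousLinearMap.adjoint_comp, hPadj, hAadj,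
      ContinuousLinearMap.adjoint_adjoint]
  -- the key block identity
  have h2 : ∀ p q : Fin n × Fin n, (ContinuousLinearMap.adjoint (T p)).comp (T q)
      = (ContinuousLinearMap.adjoint Vi).comp ((P p.1 p.2).comp ((P q.1 q.2).comp Vi)) - (A p.1 p.2).comp (A q.1 q.2) := by
    intro p q
    rw [hadjT p]
    show ((ContinuousLinearMap.adjoint Vi).comp (P p.1 p.2) - (A p.1 p.2).comp (ContinuousLinearMap.adjoint Vi)).comp
      ((P q.1 q.2).comp Vi - Vi.comp (A q.1 q.2)) = _
    rw [ContinuousLinearMap.sub_comp, ContinuousLinearMap.comp_sub,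
      ContinuousLinearMap.comp_sub]
    have e1 : ((ContinuousLinearMap.adjoint Vi).comp (P p.1 p.2)).comp ((P q.1 q.2).comp Vi)
        = (ContinuousLinearMap.adjoint Vi).comp ((P p.1 p.2).comp ((P q.1 q.2).comp Vi)) := by
      rw [ContinuousLinearMap.comp_assoc]
    have e2 : ((ContinuousLinearMap.adjoint Vi).comp (P p.1 p.2)).comp (Vi.comp (A q.1 q.2))
        = (A p.1 p.2).comp (A q.1 q.2) := by
      rw [ContinuousLinearMap.comp_assoc, ← ContinuousLinearMap.comp_assoc (P p.1 p.2),
        ← ContinuousLinearMap.comp_assoc, ← hAV]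
    have e3 : ((A p.1 p.2).comp (ContinuousLinearMap.adjoint Vi)).comp ((P q.1 q.2).comp Vi)
        = (A p.1 p.2).comp (A q.1 q.2) := by
      rw [ContinuousLinearMap.comp_assoc, ← hAV]
    have e4 : ((A p.1 p.2).comp (ContinuousLinearMap.adjoint Vi)).comp (Vi.comp (A q.1 q.2))
        = (A p.1 p.2).comp (A q.1 q.2) := by
      rw [ContinuousLinearMap.comp_assoc,
        ← ContinuousLinearMap.comp_assoc (ContinuousLinearMap.adjoint Vi) Vi (A q.1 q.2), hVV]
      ext z
      simp
    rw [e1, e2, e3, e4]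
    abel
  have E : ∀ p q : Fin n × Fin n, phiBlocks A p q + X p q
      = (ContinuousLinearMap.adjoint (T p)).comp (T q) := by
    intro p q
    rw [h2 p q, hXdef]
    show ((if p = q then A p.1 p.2 else 0) - A p.1 p.2 * A q.1 q.2) +
      ((ContinuousLinearMap.adjoint Vi).comp ((P p.1 p.2).comp ((P q.1 q.2).comp Vi)) - (if p = q then A p.1 p.2 else 0)) = _
    rw [ContinuousLinearMap.mul_def]
    abel
  refine ⟨X, ?_, ?_, ?_⟩
  · -- self-adjointness of blockOp X
    have hXadj : ∀ p q, ContinuousLinearMap.adjoint (X p q) = X q p := by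
      intro p q
      have ha : ContinuousLinearMap.adjoint ((ContinuousLinearMap.adjoint Vi).comp
            ((P p.1 p.2).comp ((P q.1 q.2).comp Vi)))
          = (ContinuousLinearMap.adjoint Vi).comp
            ((P q.1 q.2).comp ((P p.1 p.2).comp Vi)) := by
        rw [ContinuousLinearMap.adjoint_comp, ContinuousLinearMap.adjoint_comp,
          ContinuousLinearMap.adjoint_comp, ContinuousLinearMap.adjoint_adjoint,
          hPadj, hPadj, ContinuousLinearMap.comp_assoc, ContinuousLinearMap.comp_assoc]
      have hb : ContinuousLinearMap.adjoint (if p = q then A p.1 p.2 else (0 : H →L[ℂ] H))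
          = (if q = p then A q.1 q.2 else 0) := by
        by_cases h : p = q
        · subst h
          simp [hAadj]
        · rw [if_neg h, if_neg (Ne.symm h)]
          exact map_zero _
      show ContinuousLinearMap.adjoint ((ContinuousLinearMap.adjoint Vi).comp
          ((P p.1 p.2).comp ((P q.1 q.2).comp Vi)) - (if p = q then A p.1 p.2 else 0)) = _
      rw [map_sub, ha, hb]
    rw [ContinuousLinearMap.isSelfAdjoint_iff_isSymmetric]
    intro x y
    simp only [ContinuousLinearMap.coe_coe]
    calc (inner ℂ (blockOp X x) y : ℂ) = ∑ p, ∑ q, (inner ℂ (X p q (x q)) (y p) : ℂ) := by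
          rw [PiLp.inner_apply]
          exact Finset.sum_congr rfl fun p _ => by rw [blockOp_apply, sum_inner]
      _ = ∑ p, ∑ q, (inner ℂ (x q) (X q p (y p)) : ℂ) := by
          refine Finset.sum_congr rfl fun p _ => Finset.sum_congr rfl fun q _ => ?_
          rw [← hXadj q p, ContinuousLinearMap.adjoint_inner_left]
      _ = ∑ q, ∑ p, (inner ℂ (x q) (X q p (y p)) : ℂ) := Finset.sum_comm
      _ = inner ℂ x (blockOp X y) := by
          rw [PiLp.inner_apply]
          exact (Finset.sum_congr rfl fun q _ => by rw [blockOp_apply, inner_sum]).symm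
  · -- forbidden blocks vanish
    intro p q hpq
    show (ContinuousLinearMap.adjoint Vi).comp ((P p.1 p.2).comp ((P q.1 q.2).comp Vi)) -
      (if p = q then A p.1 p.2 else 0) = 0
    by_cases hpe : p = q
    · subst hpe
      rw [← ContinuousLinearMap.comp_assoc (P p.1 p.2) (P p.1 p.2) Vi,
        show (P p.1 p.2).comp (P p.1 p.2) = P p.1 p.2 from (hP p.1 p.2).2, ← hAV, if_pos rfl,
        sub_self]
    · have hz : (P p.1 p.2).comp (P q.1 q.2) = 0 := by
        rcases hpq with h1 | h1
        · have h22 : p.2 ≠ q.2 := fun h => hpe (Prod.ext h1 h)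
          have := proj_orthog (fun k => P p.1 k) (fun k => (hP p.1 k).1)
            (fun k => (hP p.1 k).2) (hrow p.1) h22
          rw [h1] at this ⊢
          exact this
        · have h11 : p.1 ≠ q.1 := fun h => hpe (Prod.ext h h1)
          have := proj_orthog (fun k => P k p.2) (fun k => (hP k p.2).1)
            (fun k => (hP k p.2).2) (hcol p.2) h11
          rw [h1] at this ⊢
          exact this
      rw [if_neg hpe, sub_zero, ← ContinuousLinearMap.comp_assoc (P p.1 p.2) (P q.1 q.2) Vi, hz,
        ContinuousLinearMap.zero_comp, ContinuousLinearMap.comp_zero]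
  · -- positivity
    have hkey : ∀ x y : PiLp 2 (fun _ : Fin n × Fin n => H),
        (inner ℂ ((blockOp (phiBlocks A) + blockOp X) x) y : ℂ)
          = inner ℂ (∑ q, T q (x q)) (∑ p, T p (y p)) := by
      intro x y
      calc (inner ℂ ((blockOp (phiBlocks A) + blockOp X) x) y : ℂ)
          = ∑ p, ∑ q, (inner ℂ ((phiBlocks A p q + X p q) (x q)) (y p) : ℂ) := by
            rw [ContinuousLinearMap.add_apply, PiLp.inner_apply]
            refine Finset.sum_congr rfl fun p _ => ?_
            have hval : (blockOp (phiBlocks A) x + blockOp X x) p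
                = blockOp (phiBlocks A) x p + blockOp X x p := rfl
            rw [hval, blockOp_apply, blockOp_apply, ← Finset.sum_add_distrib, sum_inner]
            exact Finset.sum_congr rfl fun q _ => by rw [ContinuousLinearMap.add_apply]
        _ = ∑ p, ∑ q, (inner ℂ (T q (x q)) (T p (y p)) : ℂ) := by
            refine Finset.sum_congr rfl fun p _ => Finset.sum_congr rfl fun q _ => ?_
            rw [E p q, ContinuousLinearMap.comp_apply,
              ContinuousLinearMap.adjoint_inner_left]
        _ = ∑ q, ∑ p, (inner ℂ (T q (x q)) (T p (y p)) : ℂ) := Finset.sum_comm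
        _ = inner ℂ (∑ q, T q (x q)) (∑ p, T p (y p)) := by
            rw [sum_inner]
            exact Finset.sum_congr rfl fun q _ => (inner_sum _ _ _).symm
    constructor
    · intro x y
      simp only [ContinuousLinearMap.coe_coe]
      calc (inner ℂ ((blockOp (phiBlocks A) + blockOp X) x) y : ℂ)
          = inner ℂ (∑ q, T q (x q)) (∑ p, T p (y p)) := hkey x y
        _ = (starRingEnd ℂ) (inner ℂ (∑ p, T p (y p)) (∑ q, T q (x q))) :=
            (inner_conj_symm _ _).symm
        _ = (starRingEnd ℂ) (inner ℂ ((blockOp (phiBlocks A) + blockOp X) y) x) := by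
            rw [hkey]
        _ = inner ℂ x ((blockOp (phiBlocks A) + blockOp X) y) := inner_conj_symm _ _
    · intro x
      rw [ContinuousLinearMap.reApplyInnerSelf, hkey]
      exact inner_self_nonneg
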